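/- arXiv:1810.12113 — 2 statements merged into one kernel-verified Lean document; each statement's English description precedes it below -/
import Mathlib

section
/- Under the weak annihilating conditions, if u and v are nonempty subsets of {1,...,N} with v strictly contained in u, and y_u, y_v are square-integrable component functions satisfying the weak annihilating conditions with respect to the marginal densities, then E[y_u(X_u) y_v(X_v)] = 0. -/
open MeasureTheory

theorem split_at {ι : Type} [Fintype ι] [DecidableEq ι] (i0 : ι)
    (g : (ι → ℝ) → ℝ) (hint : Integrable g) :
    ∫ z : ι → ℝ, g z = ∫ w : {j : ι // ¬ j = i0} → ℝ, ∫ t : ℝ,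
      g (fun j => if h : j = i0 then t else w ⟨j, h⟩) := by
  classical
  haveI hU : Unique {j : ι // j = i0} := ⟨⟨⟨i0, rfl⟩⟩, fun a => Subtype.ext a.2⟩
  have hd : (default : {j : ι // j = i0}) = ⟨i0, rfl⟩ := Subtype.ext (default : {j : ι // j = i0}).2
  have e1 := MeasureTheory.volume_preserving_piEquivPiSubtypeProd
    (fun _ : ι => ℝ) (fun j => j = i0)
  have e2 : MeasurePreserving (MeasurableEquiv.funUnique {j : ι // j = i0} ℝ)
      (volume : Measure ({j : ι // j = i0} → ℝ)) volume := by
    rw [volume_pi]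
    have h := MeasureTheory.measurePreserving_funUnique (volume : Measure ℝ) {j : ι // j = i0}
    convert h using 2
    rfl
  set E : (ι → ℝ) ≃ᵐ ℝ × ({j : ι // ¬ j = i0} → ℝ) :=
    (MeasurableEquiv.piEquivPiSubtypeProd (fun _ : ι => ℝ) (fun j => j = i0)).trans
      ((MeasurableEquiv.funUnique {j : ι // j = i0} ℝ).prodCongr (MeasurableEquiv.refl _))
    with hE
  have mp : MeasurePreserving E volume (volume.prod volume) := by
    rw [MeasureTheory.Measure.volume_eq_prod] at e1
    refine e1.trans ?_
    have h3 : MeasurePreserving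
        (Prod.map (MeasurableEquiv.funUnique {j : ι // j = i0} ℝ)
          (id : ({j : ι // ¬ j = i0} → ℝ) → _))
        (volume.prod volume) (volume.prod volume) :=
      MeasurePreserving.prod e2 (MeasurePreserving.id _)
    have hfun : ⇑((MeasurableEquiv.funUnique {j : ι // j = i0} ℝ).prodCongr
        (MeasurableEquiv.refl ({j : ι // ¬ j = i0} → ℝ))) =
        Prod.map (MeasurableEquiv.funUnique {j : ι // j = i0} ℝ) id := rfl
    rw [hfun]
    convert h3 using 3 <;> congr 1 <;> exact Subsingleton.elim _ _
  have hsymm : ∀ (t : ℝ) (w : {j : ι // ¬ j = i0} → ℝ),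
      E.symm (t, w) = fun j => if h : j = i0 then t else w ⟨j, h⟩ := by
    intro t w
    have h1 : E (fun j => if h : j = i0 then t else w ⟨j, h⟩) = (t, w) := by
      refine Prod.ext ?_ ?_
      · simp [hE, MeasurableEquiv.trans_apply, MeasurableEquiv.piEquivPiSubtypeProd,
          Equiv.piEquivPiSubtypeProd, MeasurableEquiv.prodCongr, Equiv.prodCongr,
          MeasurableEquiv.funUnique, Equiv.funUnique, MeasurableEquiv.piUnique,
          Equiv.piUnique, MeasurableEquiv.coe_mk, hd]
      · funext x
        simp [hE, MeasurableEquiv.trans_apply, MeasurableEquiv.piEquivPiSubtypeProd,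
          Equiv.piEquivPiSubtypeProd, MeasurableEquiv.prodCongr, Equiv.prodCongr,
          MeasurableEquiv.refl, MeasurableEquiv.coe_mk, x.2]
    rw [← h1, MeasurableEquiv.symm_apply_apply]
  have mps : MeasurePreserving E.symm (volume.prod volume) volume :=
    MeasurePreserving.symm E mp
  have hint2 : Integrable (g ∘ E.symm) (volume.prod volume) :=
    (mps.integrable_comp_emb E.symm.measurableEmbedding).mpr hint
  calc ∫ z : ι → ℝ, g z = ∫ q, (g ∘ E.symm) q ∂(volume.prod volume) :=
        (mps.integral_comp' g).symm
    _ = ∫ w, ∫ t, (g ∘ E.symm) (t, w) := integral_prod_symm _ hint2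
    _ = _ := by
        refine integral_congr_ae (Filter.Eventually.of_forall fun w => ?_)
        refine integral_congr_ae (Filter.Eventually.of_forall fun t => ?_)
        simp [hsymm]

/-- Hierarchical orthogonality of generalized ADD component functions: if `v ⊊ u` and the
square-integrable component functions `y_u`, `y_v` satisfy the weak annihilating
conditions with respect to the marginal densities `fu`, `fv`, then
`E[y_u(X_u) y_v(X_v)] = 0`. -/
theorem stmt_7 (N : ℕ) (f : (Fin N → ℝ) → ℝ)
    (hf_nonneg : ∀ x, 0 ≤ f x) (hf_prob : ∫ x, f x = 1)
    (u v : Finset (Fin N)) (hu : u.Nonempty) (hv : v.Nonempty) (hvu : v ⊂ u)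
    (yu fu : (↥u → ℝ) → ℝ) (yv fv : (↥v → ℝ) → ℝ)
    (hmargu : ∀ z : ↥u → ℝ, fu z =
      ∫ w : (↥uᶜ → ℝ), f (fun i =>
        if h : i ∈ u then z ⟨i, h⟩ else w ⟨i, Finset.mem_compl.mpr h⟩))
    (hmargv : ∀ z : ↥v → ℝ, fv z =
      ∫ w : (↥vᶜ → ℝ), f (fun i =>
        if h : i ∈ v then z ⟨i, h⟩ else w ⟨i, Finset.mem_compl.mpr h⟩))
    (hL2u : Integrable (fun z => (yu z) ^ 2 * fu z))
    (hL2v : Integrable (fun z => (yv z) ^ 2 * fv z))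
    (hannihilate_u : ∀ (i : Fin N) (hi : i ∈ u) (z : ↥u → ℝ),
      ∫ t : ℝ, yu (Function.update z ⟨i, hi⟩ t) * fu (Function.update z ⟨i, hi⟩ t) = 0)
    (hannihilate_v : ∀ (i : Fin N) (hi : i ∈ v) (z : ↥v → ℝ),
      ∫ t : ℝ, yv (Function.update z ⟨i, hi⟩ t) * fv (Function.update z ⟨i, hi⟩ t) = 0)
    (hint : Integrable (fun z : ↥u → ℝ =>
      yu z * yv (fun i => z ⟨(i : Fin N), hvu.subset i.2⟩) * fu z)) :
    ∫ z : ↥u → ℝ, yu z * yv (fun i => z ⟨(i : Fin N), hvu.subset i.2⟩) * fu z = 0 := by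
  classical
  obtain ⟨i0, hi0u, hi0v⟩ := Finset.exists_of_ssubset hvu
  set i0' : ↥u := ⟨i0, hi0u⟩ with hi0'
  set g : (↥u → ℝ) → ℝ :=
    fun z => yu z * yv (fun i => z ⟨(i : Fin N), hvu.subset i.2⟩) * fu z with hg
  rw [split_at i0' g hint]
  have hinner : ∀ w : {j : ↥u // ¬ j = i0'} → ℝ,
      ∫ t : ℝ, g (fun j => if h : j = i0' then t else w ⟨j, h⟩) = 0 := by
    intro w
    set z0 : ↥u → ℝ := fun j => if h : j = i0' then 0 else w ⟨j, h⟩ with hz0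
    have hupd : ∀ t : ℝ, (fun j => if h : j = i0' then t else w ⟨j, h⟩) =
        Function.update z0 i0' t := by
      intro t
      funext j
      by_cases h : j = i0'
      · subst h; simp [Function.update_self]
      · simp [Function.update_of_ne h, hz0, h]
    have hyv : ∀ t : ℝ,
        (fun i : ↥v => Function.update z0 i0' t ⟨(i : Fin N), hvu.subset i.2⟩) =
        (fun i : ↥v => z0 ⟨(i : Fin N), hvu.subset i.2⟩) := by
      intro t
      funext i
      refine Function.update_of_ne ?_ _ _
      intro hcon
      apply hi0v
      have : (i : Fin N) = i0 := congrArg Subtype.val hcon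
      rw [← this]; exact i.2
    simp only [hupd, hg]
    set c : ℝ := yv (fun i : ↥v => z0 ⟨(i : Fin N), hvu.subset i.2⟩) with hc
    have : ∀ t : ℝ, yu (Function.update z0 i0' t) *
        yv (fun i : ↥v => Function.update z0 i0' t ⟨(i : Fin N), hvu.subset i.2⟩) *
        fu (Function.update z0 i0' t) =
        c * (yu (Function.update z0 i0' t) * fu (Function.update z0 i0' t)) := by
      intro t; rw [hyv t, ← hc]; ring
    rw [integral_congr_ae (Filter.Eventually.of_forall this), integral_const_mul,
      hannihilate_u i0 hi0u z0, mul_zero]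
  simp only [hinner, integral_zero]
end

section
/- If u, v are nonempty subsets of {1,...,N} with v ⊊ u, and P_{u,j} satisfies the weak annihilating conditions for u while Q_v is any integrable function of X_v, then E[P_{u,j}(X_u) Q_v(X_v)] = 0. -/
open MeasureTheory

/-- First zero case of Proposition 3: if `v ⊊ u`, `P` (a function of `X_u`) satisfies
the weak annihilating conditions for `u`, and `Q` is any function of `X_v` such that the
product is integrable, then `E[P(X_u) Q(X_v)] = 0`. -/
theorem stmt_9 (N : ℕ) (f : (Fin N → ℝ) → ℝ)
    (hf_nonneg : ∀ x, 0 ≤ f x) (hf_prob : ∫ x, f x = 1)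
    (u v : Finset (Fin N)) (hu : u.Nonempty) (hv : v.Nonempty) (hvu : v ⊂ u)
    (P fu : (↥u → ℝ) → ℝ) (Q : (↥v → ℝ) → ℝ)
    (hmargu : ∀ z : ↥u → ℝ, fu z =
      ∫ w : (↥uᶜ → ℝ), f (fun i =>
        if h : i ∈ u then z ⟨i, h⟩ else w ⟨i, Finset.mem_compl.mpr h⟩))
    (hL2P : Integrable (fun z => (P z) ^ 2 * fu z))
    (hannihilate : ∀ (i : Fin N) (hi : i ∈ u) (z : ↥u → ℝ),
      ∫ t : ℝ, P (Function.update z ⟨i, hi⟩ t) * fu (Function.update z ⟨i, hi⟩ t) = 0)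
    (hint : Integrable (fun z : ↥u → ℝ =>
      P z * Q (fun i => z ⟨(i : Fin N), hvu.subset i.2⟩) * fu z)) :
    ∫ z : ↥u → ℝ, P z * Q (fun i => z ⟨(i : Fin N), hvu.subset i.2⟩) * fu z = 0 := by
  classical
  obtain ⟨i, hiu, hiv⟩ := Finset.exists_of_ssubset hvu
  set i₀ : ↥u := ⟨i, hiu⟩ with hi₀
  haveI : Unique {j : ↥u // ¬ j ≠ i₀} :=
    ⟨⟨⟨i₀, not_not_intro rfl⟩⟩, fun a => Subtype.ext (not_not.mp a.2)⟩
  set g : (↥u → ℝ) → ℝ :=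
    fun z => P z * Q (fun j => z ⟨(j : Fin N), hvu.subset j.2⟩) * fu z with hg
  let e := MeasurableEquiv.piEquivPiSubtypeProd (fun _ : ↥u => ℝ) (fun j => j ≠ i₀)
  have hmp := volume_preserving_piEquivPiSubtypeProd (fun _ : ↥u => ℝ) (fun j => j ≠ i₀)
  have h1 : ∫ z, g z = ∫ p, g (e.symm p) := ((hmp.symm e).integral_comp' g).symm
  have h2 : Integrable (fun p => g (e.symm p)) :=
    ((hmp.symm e).integrable_comp_emb e.symm.measurableEmbedding).mpr hint
  have h3 : ∫ p, g (e.symm p) = ∫ y, ∫ w, g (e.symm (y, w)) := by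
    rw [Measure.volume_eq_prod] at h2 ⊢
    exact integral_prod _ h2
  have hval : ∀ (t : ℝ) (s : {j : ↥u // ¬ j ≠ i₀}),
      (MeasurableEquiv.funUnique {j : ↥u // ¬ j ≠ i₀} ℝ).symm t s = t := by
    intro t s
    rw [Unique.eq_default s]
    exact (MeasurableEquiv.funUnique {j : ↥u // ¬ j ≠ i₀} ℝ).apply_symm_apply t
  have hsymm : ∀ (p : ({j : ↥u // j ≠ i₀} → ℝ) × ({j : ↥u // ¬ j ≠ i₀} → ℝ)) (j : ↥u),
      e.symm p j = if h : j ≠ i₀ then p.1 ⟨j, h⟩ else p.2 ⟨j, h⟩ := fun p j => rfl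
  have key : ∀ y : ({j : ↥u // j ≠ i₀} → ℝ), ∫ w, g (e.symm (y, w)) = 0 := by
    intro y
    have hfu := volume_preserving_funUnique {j : ↥u // ¬ j ≠ i₀} ℝ
    have h4 : ∫ w, g (e.symm (y, w)) =
        ∫ t : ℝ, g (e.symm (y, (MeasurableEquiv.funUnique {j : ↥u // ¬ j ≠ i₀} ℝ).symm t)) := by
      have := ((hfu.symm _).integral_comp' fun w => g (e.symm (y, w))).symm
      convert this using 3
      all_goals
        rw [Subsingleton.elim (Unique.fintype : Fintype {j : ↥u // ¬ j ≠ i₀})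
          (Subtype.fintype fun j : ↥u => ¬ j ≠ i₀)]
    rw [h4]
    set z₀ : ↥u → ℝ := fun j => if h : j ≠ i₀ then y ⟨j, h⟩ else 0 with hz₀
    have hupd : ∀ t : ℝ,
        (e.symm (y, (MeasurableEquiv.funUnique {j : ↥u // ¬ j ≠ i₀} ℝ).symm t) : ↥u → ℝ)
          = Function.update z₀ i₀ t := by
      intro t
      funext j
      rw [hsymm]
      by_cases hj : j ≠ i₀
      · rw [dif_pos hj, Function.update_of_ne hj, hz₀]
        simp only [dif_pos hj]
      · rw [dif_neg hj]
        have hji : j = i₀ := not_not.mp hj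
        subst hji
        rw [Function.update_self]
        exact hval t _
    have hQ : ∀ t : ℝ,
        (fun j : ↥v => Function.update z₀ i₀ t ⟨(j : Fin N), hvu.subset j.2⟩)
          = (fun j : ↥v => z₀ ⟨(j : Fin N), hvu.subset j.2⟩) := by
      intro t
      funext j
      apply Function.update_of_ne
      intro hcontra
      apply hiv
      have : (j : Fin N) = i := congrArg Subtype.val hcontra
      exact this ▸ j.2
    calc ∫ t : ℝ, g (e.symm (y, (MeasurableEquiv.funUnique {j : ↥u // ¬ j ≠ i₀} ℝ).symm t))
        = ∫ t : ℝ, Q (fun j : ↥v => z₀ ⟨(j : Fin N), hvu.subset j.2⟩) *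
            (P (Function.update z₀ i₀ t) * fu (Function.update z₀ i₀ t)) := by
          congr 1
          funext t
          rw [hg]
          simp only [hupd t, hQ t]
          ring
      _ = Q (fun j : ↥v => z₀ ⟨(j : Fin N), hvu.subset j.2⟩) *
            ∫ t : ℝ, P (Function.update z₀ i₀ t) * fu (Function.update z₀ i₀ t) :=
          integral_const_mul _ _
      _ = 0 := by rw [hannihilate i hiu z₀]; ring
  calc ∫ z : ↥u → ℝ, P z * Q (fun j => z ⟨(j : Fin N), hvu.subset j.2⟩) * fu z
      = ∫ p, g (e.symm p) := h1
    _ = ∫ y, ∫ w, g (e.symm (y, w)) := h3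
    _ = 0 := by simp [key]
end
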